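/- Let $k$ be a field and $S$ a finite subset of $M_n(k)$ generating $M_n(k)$ as a $k$-algebra such that $\dim_k kS^i - \dim_k kS^{i-1} \le \ell$ for a fixed positive integer $\ell$ and all $i \ge 1$ (where $kS^i$ is the span of all words in $S$ of length at most $i$). Then every word in $S$ of length $\ell(n+1)$ lies in the span of words of strictly smaller length. -/

import Mathlib

/-- The span of all words (products) of at most `i` elements of `S`,
including the empty product `1`. -/
def wordSpan (k : Type*) {A : Type*} [Field k] [Ring A] [Algebra k A]
    (S : Set A) (i : ℕ) : Submodule k A :=
  Submodule.span k {x | ∃ l : List A, l.length ≤ i ∧ (∀ a ∈ l, a ∈ S) ∧ l.prod = x}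

namespace WordProof

/-! ### Measure on words -/

def msr {N : ℕ} : List (Fin N) → ℕ
  | [] => 0
  | d :: t => d.val * N ^ t.length + msr t

lemma msr_lt {N : ℕ} (l : List (Fin N)) : msr l < N ^ l.length := by
  induction l with
  | nil => simp [msr]
  | cons d t ih =>
    have hd := d.isLt
    have h1 : (d.val + 1) * N ^ t.length ≤ N * N ^ t.length :=
      Nat.mul_le_mul_right _ (by omega)
    calc msr (d :: t) = d.val * N ^ t.length + msr t := rfl
      _ < d.val * N ^ t.length + N ^ t.length := by omega
      _ = (d.val + 1) * N ^ t.length := by ring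
      _ ≤ N * N ^ t.length := h1
      _ = N ^ (d :: t).length := by rw [List.length_cons, pow_succ]; ring

lemma msr_append {N : ℕ} (A B : List (Fin N)) :
    msr (A ++ B) = msr A * N ^ B.length + msr B := by
  induction A with
  | nil => simp [msr]
  | cons d t ih =>
    show d.val * N ^ (t ++ B).length + msr (t ++ B) = _
    rw [ih, List.length_append, pow_add]
    show _ = (d.val * N ^ t.length + msr t) * N ^ B.length + msr B
    ring

lemma digit_cancel {d₁ d₂ m₁ m₂ K : ℕ} (h₁ : m₁ < K) (h₂ : m₂ < K)
    (h : d₁ * K + m₁ = d₂ * K + m₂) : d₁ = d₂ ∧ m₁ = m₂ := by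
  rcases Nat.lt_trichotomy d₁ d₂ with hlt | heq | hgt
  · exfalso
    have : d₁ * K + K ≤ d₂ * K := by
      have := Nat.mul_le_mul_right K hlt; nlinarith
    omega
  · exact ⟨heq, by subst heq; omega⟩
  · exfalso
    have : d₂ * K + K ≤ d₁ * K := by
      have := Nat.mul_le_mul_right K hgt; nlinarith
    omega

lemma msr_inj {N : ℕ} : ∀ {l₁ l₂ : List (Fin N)}, l₁.length = l₂.length →
    msr l₁ = msr l₂ → l₁ = l₂ := by
  intro l₁
  induction l₁ with
  | nil =>
    intro l₂ h _
    cases l₂ with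
    | nil => rfl
    | cons d t => simp at h
  | cons d t ih =>
    intro l₂ h hm
    cases l₂ with
    | nil => simp at h
    | cons d' t' =>
      have hlen : t.length = t'.length := by simpa using h
      have hm' : d.val * N ^ t.length + msr t = d'.val * N ^ t.length + msr t' := by
        have h2 : (N : ℕ) ^ t'.length = N ^ t.length := by rw [hlen]
        calc d.val * N ^ t.length + msr t = msr (d :: t) := rfl
          _ = msr (d' :: t') := hm
          _ = d'.val * N ^ t'.length + msr t' := rfl
          _ = d'.val * N ^ t.length + msr t' := by rw [h2]
      obtain ⟨hd, hmm⟩ := digit_cancel (msr_lt t) (hlen ▸ msr_lt t') hm'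
      have ht : t = t' := ih hlen hmm
      subst ht
      rw [Fin.ext hd]

lemma msr_replace {N : ℕ} (P Q c c' : List (Fin N)) (hlen : c'.length = c.length)
    (h : msr c' < msr c) : msr (P ++ c' ++ Q) < msr (P ++ c ++ Q) := by
  rw [List.append_assoc, List.append_assoc, msr_append P (c' ++ Q), msr_append P (c ++ Q)]
  have hl : (c' ++ Q).length = (c ++ Q).length := by simp [hlen]
  rw [hl]
  have hlt : msr (c' ++ Q) < msr (c ++ Q) := by
    rw [msr_append, msr_append]
    have h1 : msr Q < N ^ Q.length := msr_lt Q
    have h2 : (msr c' + 1) * N ^ Q.length ≤ msr c * N ^ Q.length :=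
      Nat.mul_le_mul_right _ (by omega)
    nlinarith
  omega

/-! ### Factors of words -/

def fac {α : Type*} (l : List α) (t i : ℕ) : List α := (l.drop t).take i

lemma fac_add {α : Type*} (l : List α) (t x y : ℕ) :
    fac l t (x + y) = fac l t x ++ fac l (t + x) y := by
  unfold fac
  rw [List.take_add, List.drop_drop]

lemma fac_length {α : Type*} (l : List α) (t i : ℕ) (h : t + i ≤ l.length) :
    (fac l t i).length = i := by
  simp [fac]; omega

lemma fac_take {α : Type*} (l : List α) (t i j : ℕ) (h : j ≤ i) :
    (fac l t i).take j = fac l t j := by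
  unfold fac
  rw [List.take_take, min_eq_left h]

lemma fac_decomp {α : Type*} (l : List α) (t i : ℕ) :
    l = l.take t ++ fac l t i ++ l.drop (t + i) := by
  unfold fac
  rw [List.append_assoc, ← List.drop_drop]
  rw [List.take_append_drop, List.take_append_drop]

/-! ### wordSpan lemmas -/

variable {k : Type*} {A : Type*} [Field k] [Ring A] [Algebra k A] {S : Set A}

lemma prod_mem_wordSpan {l : List A} (hl : ∀ a ∈ l, a ∈ S) {i : ℕ} (h : l.length ≤ i) :
    l.prod ∈ wordSpan k S i :=
  Submodule.subset_span ⟨l, h, hl, rfl⟩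

lemma wordSpan_mono {i j : ℕ} (h : i ≤ j) : wordSpan k S i ≤ wordSpan k S j :=
  Submodule.span_mono (fun _ ⟨l, hl, hS, hp⟩ => ⟨l, hl.trans h, hS, hp⟩)

lemma mul_wordSpan_mul {P Q : List A} (hP : ∀ a ∈ P, a ∈ S) (hQ : ∀ a ∈ Q, a ∈ S)
    {i : ℕ} {x : A} (hx : x ∈ wordSpan k S i) :
    P.prod * x * Q.prod ∈ wordSpan k S (P.length + i + Q.length) := by
  induction hx using Submodule.span_induction with
  | mem y hy =>
    obtain ⟨l, hl, hS, rfl⟩ := hy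
    refine Submodule.subset_span ⟨P ++ l ++ Q, ?_, ?_, ?_⟩
    · simp only [List.length_append]; omega
    · intro a ha
      simp only [List.mem_append] at ha
      rcases ha with (ha | ha) | ha
      · exact hP a ha
      · exact hS a ha
      · exact hQ a ha
    · rw [List.prod_append, List.prod_append]
  | zero => simp
  | add y z _ _ hy hz =>
    rw [mul_add, add_mul]; exact Submodule.add_mem _ hy hz
  | smul c y _ hy =>
    rw [mul_smul_comm, smul_mul_assoc]; exact Submodule.smul_mem _ _ hy

lemma exists_mem_span_earlier {ι : Type*} [Fintype ι] {M : Type*} [AddCommGroup M] [Module k M]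
    (v : ι → M) (r : ι → ℕ) (hr : Function.Injective r) (h : ¬ LinearIndependent k v) :
    ∃ j, v j ∈ Submodule.span k (v '' {i | r i < r j}) := by
  classical
  rw [Fintype.not_linearIndependent_iff] at h
  obtain ⟨g, hsum, i₀, hi₀⟩ := h
  set s := Finset.univ.filter (fun i => g i ≠ 0) with hs_def
  have hs : s.Nonempty := ⟨i₀, by simp [hs_def, hi₀]⟩
  obtain ⟨j, hj, hmax⟩ := s.exists_max_image r hs
  have hgj : g j ≠ 0 := by simpa [hs_def] using hj
  refine ⟨j, ?_⟩
  have hsplit : g j • v j + ∑ i ∈ Finset.univ.erase j, g i • v i = 0 := by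
    rw [Finset.add_sum_erase Finset.univ (fun i => g i • v i) (Finset.mem_univ j)]
    exact hsum
  have hvj : v j = (-(g j)⁻¹) • ∑ i ∈ Finset.univ.erase j, g i • v i := by
    have h1 : g j • v j = -∑ i ∈ Finset.univ.erase j, g i • v i :=
      eq_neg_of_add_eq_zero_left hsplit
    rw [neg_smul, ← smul_neg, ← h1, smul_smul, inv_mul_cancel₀ hgj, one_smul]
  rw [hvj]
  refine Submodule.smul_mem _ _ (Submodule.sum_mem _ ?_)
  intro i hi
  rcases eq_or_ne (g i) 0 with h0 | h0
  · rw [h0, zero_smul]; exact Submodule.zero_mem _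
  · refine Submodule.smul_mem _ _ (Submodule.subset_span ⟨i, ?_, rfl⟩)
    have hi_mem : i ∈ s := by simp [hs_def, h0]
    have hne : i ≠ j := (Finset.mem_erase.mp hi).1
    exact lt_of_le_of_ne (hmax i hi_mem) (fun hrr => hne (hr hrr))

lemma finrank_map_mkQ_le {V W : Submodule k A} [FiniteDimensional k A] (hVW : V ≤ W) :
    Module.finrank k (W.map V.mkQ) + Module.finrank k V = Module.finrank k W := by
  let f : W →ₗ[k] (A ⧸ V) := V.mkQ.comp W.subtype
  have hr : LinearMap.range f = W.map V.mkQ := by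
    rw [LinearMap.range_comp, Submodule.range_subtype]
  have hk : LinearMap.ker f = V.comap W.subtype := by
    rw [LinearMap.ker_comp, Submodule.ker_mkQ]
  have h := LinearMap.finrank_range_add_finrank_ker f
  rw [hr, hk] at h
  rw [← h, (Submodule.comapSubtypeEquivOfLe hVW).finrank_eq]

/-! ### Evaluation of index words -/

def ev {N : ℕ} {M : Type*} [Monoid M] (e : Fin N → M) (ω : List (Fin N)) : M :=
  (ω.map e).prod

lemma ev_append {N : ℕ} {M : Type*} [Monoid M] (e : Fin N → M) (a b : List (Fin N)) :
    ev e (a ++ b) = ev e a * ev e b := by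
  simp [ev]


/-! ### The key lemma -/

theorem key {k : Type*} [Field k] {n ℓ N : ℕ} (hn : 2 ≤ n) (hℓ : 1 ≤ ℓ)
    {S : Set (Matrix (Fin n) (Fin n) k)}
    (hgrowth : ∀ i : ℕ, Module.finrank k (wordSpan k S (i + 1)) ≤
      Module.finrank k (wordSpan k S i) + ℓ)
    (e : Fin N → Matrix (Fin n) (Fin n) k) (he : ∀ d, e d ∈ S) :
    ∀ (m : ℕ) (ω : List (Fin N)), ω.length = ℓ * (n + 1) → msr ω < m →
      ev e ω ∈ wordSpan k S (ℓ * (n + 1) - 1) := by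
  intro m
  induction m with
  | zero => intro ω _ h; omega
  | succ m IH =>
    intro ω hlen hm
    classical
    set L := ℓ * (n + 1) with hLdef
    have hLsplit : L = ℓ * n + ℓ := by rw [hLdef]; ring
    have hℓn : ℓ + 1 ≤ ℓ * n := by
      have : ℓ * 2 ≤ ℓ * n := Nat.mul_le_mul_left ℓ hn
      omega
    have hev_mem : ∀ (c : List (Fin N)) (i : ℕ), c.length ≤ i → ev e c ∈ wordSpan k S i := by
      intro c i hc
      refine prod_mem_wordSpan ?_ (by simpa using hc)
      intro a ha
      obtain ⟨d, _, rfl⟩ := List.mem_map.mp ha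
      exact he d
    have hmul : ∀ (P Q : List (Fin N)) {i : ℕ} {x : Matrix (Fin n) (Fin n) k},
        x ∈ wordSpan k S i →
        ev e P * x * ev e Q ∈ wordSpan k S (P.length + i + Q.length) := by
      intro P Q i x hx
      have h1 : ∀ a ∈ P.map e, a ∈ S := by
        intro a ha; obtain ⟨d, _, rfl⟩ := List.mem_map.mp ha; exact he d
      have h2 : ∀ a ∈ Q.map e, a ∈ S := by
        intro a ha; obtain ⟨d, _, rfl⟩ := List.mem_map.mp ha; exact he d
      have := mul_wordSpan_mul h1 h2 hx
      simpa [ev] using this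
    set D : ℕ → Finset (List (Fin N)) :=
      fun i => (Finset.range (L - i + 1)).image (fun t => fac ω t i) with hDdef
    have hDlen : ∀ i, i ≤ L → ∀ c ∈ D i, c.length = i := by
      intro i hiL c hc
      rw [hDdef] at hc
      obtain ⟨t, ht, rfl⟩ := Finset.mem_image.mp hc
      rw [Finset.mem_range] at ht
      exact fac_length ω t i (by omega)
    set Tset : ℕ → List (Fin N) → Set (Matrix (Fin n) (Fin n) k) :=
      fun i c => ev e '' {c' | c' ∈ D i ∧ msr c' < msr c} with hTdef
    by_cases hbad : ∃ i, 1 ≤ i ∧ i ≤ ℓ ∧ ∃ c ∈ D i,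
        ev e c ∈ Submodule.span k (Tset i c) ⊔ wordSpan k S (i - 1)
    · -- BAD case : rewrite to lexicographically smaller words
      obtain ⟨i, hi1, hiℓ, c, hcD, hcmem⟩ := hbad
      have hiL : i ≤ L := by omega
      obtain ⟨t, ht, hct⟩ : ∃ t, t + i ≤ L ∧ c = fac ω t i := by
        rw [hDdef] at hcD
        obtain ⟨t, ht, h⟩ := Finset.mem_image.mp hcD
        rw [Finset.mem_range] at ht
        exact ⟨t, by omega, h.symm⟩
      have hlc : c.length = i := hDlen i hiL c hcD
      have hdec : ω = ω.take t ++ c ++ ω.drop (t + i) := by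
        rw [hct]; exact fac_decomp ω t i
      have hlP : (ω.take t).length = t := by
        rw [List.length_take]; omega
      have hlQ : (ω.drop (t + i)).length = L - (t + i) := by
        rw [List.length_drop, hlen]
      rw [Submodule.mem_sup] at hcmem
      obtain ⟨y, hy, z, hz, hyz⟩ := hcmem
      have hω : ev e ω = ev e (ω.take t) * ev e c * ev e (ω.drop (t + i)) := by
        conv_lhs => rw [hdec]
        rw [ev_append, ev_append]
      have hzpart : ev e (ω.take t) * z * ev e (ω.drop (t + i)) ∈ wordSpan k S (L - 1) := by
        have h1 := hmul (ω.take t) (ω.drop (t + i)) hz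
        rw [hlP, hlQ] at h1
        exact wordSpan_mono (by omega) h1
      have hypart : ev e (ω.take t) * y * ev e (ω.drop (t + i)) ∈ wordSpan k S (L - 1) := by
        set μ : Matrix (Fin n) (Fin n) k →ₗ[k] Matrix (Fin n) (Fin n) k :=
          (LinearMap.mulRight k (ev e (ω.drop (t + i)))).comp
            (LinearMap.mulLeft k (ev e (ω.take t))) with hμdef
        have hμ : ∀ x, μ x = ev e (ω.take t) * x * ev e (ω.drop (t + i)) := fun x => rfl
        have h1 : μ y ∈ Submodule.map μ (Submodule.span k (Tset i c)) :=
          Submodule.mem_map_of_mem hy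
        rw [Submodule.map_span] at h1
        have h2 : Submodule.span k (μ '' Tset i c) ≤ wordSpan k S (L - 1) := by
          rw [Submodule.span_le]
          rintro x ⟨x', hx', rfl⟩
          rw [hTdef] at hx'
          obtain ⟨c', ⟨hc'D, hc'msr⟩, rfl⟩ := hx'
          have hlc' : c'.length = i := hDlen i hiL c' hc'D
          have hlen' : (ω.take t ++ c' ++ ω.drop (t + i)).length = L := by
            simp only [List.length_append, hlP, hlQ, hlc']; omega
          have hmsr' : msr (ω.take t ++ c' ++ ω.drop (t + i)) < m := by
            have hrep := msr_replace (ω.take t) (ω.drop (t + i)) c c'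
              (hlc'.trans hlc.symm) hc'msr
            rw [← hdec] at hrep
            omega
          have h3 := IH (ω.take t ++ c' ++ ω.drop (t + i)) hlen' hmsr'
          rw [ev_append, ev_append] at h3
          rw [SetLike.mem_coe]
          rw [hμ]
          exact h3
        have h4 := h2 h1
        rwa [hμ] at h4
      rw [hω, ← hyz, mul_add, add_mul]
      exact Submodule.add_mem _ hypart hzpart
    · -- GOOD case
      push_neg at hbad
      have hcard : ∀ i, 1 ≤ i → i ≤ ℓ → (D i).card ≤ ℓ := by
        intro i hi1 hiℓ
        by_contra hgt
        push_neg at hgt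
        set V := wordSpan k S (i - 1) with hVdef
        set v : {x // x ∈ D i} → (Matrix (Fin n) (Fin n) k ⧸ V) :=
          fun c => V.mkQ (ev e ↑c) with hvdef
        have hiL : i ≤ L := by omega
        have hrinj : Function.Injective (fun c : {x // x ∈ D i} => msr (c : List (Fin N))) := by
          intro c₁ c₂ h
          have l₁ : (c₁ : List (Fin N)).length = i := hDlen i hiL _ c₁.2
          have l₂ : (c₂ : List (Fin N)).length = i := hDlen i hiL _ c₂.2
          exact Subtype.ext (msr_inj (l₁.trans l₂.symm) h)
        have hnotind : ¬ LinearIndependent k v := by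
          intro hind
          have h1 : Module.finrank k (Submodule.span k (Set.range v)) = (D i).card := by
            rw [finrank_span_eq_card hind, Fintype.card_coe]
          have hsub : Submodule.span k (Set.range v) ≤ (wordSpan k S i).map V.mkQ := by
            rw [Submodule.span_le]
            rintro x ⟨c, rfl⟩
            exact Submodule.mem_map_of_mem
              (hev_mem _ i (le_of_eq (hDlen i hiL _ c.2)))
          have h2 := finrank_map_mkQ_le (V := V) (W := wordSpan k S i)
            (wordSpan_mono (by omega))
          have h3 : Module.finrank k (wordSpan k S i) ≤ Module.finrank k V + ℓ := by
            have h4 := hgrowth (i - 1)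
            rw [Nat.sub_add_cancel hi1] at h4
            exact h4
          have h5 := Submodule.finrank_mono hsub
          omega
        obtain ⟨j, hj⟩ := exists_mem_span_earlier v _ hrinj hnotind
        have himg : v '' {i' | msr (i' : List (Fin N)) < msr (j : List (Fin N))}
            = V.mkQ '' (Tset i ↑j) := by
          ext x
          constructor
          · rintro ⟨c', hc', rfl⟩
            exact ⟨ev e ↑c', ⟨↑c', ⟨c'.2, hc'⟩, rfl⟩, rfl⟩
          · rintro ⟨x', hx', rfl⟩
            rw [hTdef] at hx'
            obtain ⟨c', ⟨hc'D, hc'm⟩, rfl⟩ := hx'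
            exact ⟨⟨c', hc'D⟩, hc'm, rfl⟩
        rw [himg, Submodule.span_image] at hj
        have hj2 : ev e ↑j ∈ Submodule.comap V.mkQ
            (Submodule.map V.mkQ (Submodule.span k (Tset i ↑j))) := hj
        rw [Submodule.comap_map_eq, Submodule.ker_mkQ] at hj2
        exact hbad i hi1 hiℓ ↑j j.2 hj2
      set R : ℕ → ℕ := fun i => ((Finset.range (L - ℓ)).image (fun t => fac ω t i)).card
        with hRdef
      have hR0 : R 0 = 1 := by
        have hconst : (Finset.range (L - ℓ)).image (fun t => fac ω t 0) = {[]} := by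
          apply Finset.eq_singleton_iff_nonempty_unique_mem.mpr
          constructor
          · apply Finset.Nonempty.image
            rw [Finset.nonempty_range_iff]
            omega
          · intro x hx
            obtain ⟨tt, _, rfl⟩ := Finset.mem_image.mp hx
            rfl
        show ((Finset.range (L - ℓ)).image (fun t => fac ω t 0)).card = 1
        rw [hconst, Finset.card_singleton]
      have hRmono : ∀ i, R i ≤ R (i + 1) := by
        intro i
        have himg : ((Finset.range (L - ℓ)).image (fun t => fac ω t (i + 1))).image
            (List.take i) = (Finset.range (L - ℓ)).image (fun t => fac ω t i) := by
          rw [Finset.image_image]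
          apply Finset.image_congr
          intro t _
          exact fac_take ω t (i + 1) i (by omega)
        calc R i = (((Finset.range (L - ℓ)).image (fun t => fac ω t (i + 1))).image
            (List.take i)).card := by rw [himg]
          _ ≤ R (i + 1) := Finset.card_image_le
      have hRMono : Monotone R := monotone_nat_of_le_succ hRmono
      have hRℓ : R ℓ ≤ ℓ := by
        have hsub : (Finset.range (L - ℓ)).image (fun t => fac ω t ℓ) ⊆ D ℓ := by
          rw [hDdef]
          apply Finset.image_subset_image
          apply Finset.range_subset_range.mpr
          omega
        exact le_trans (Finset.card_le_card hsub) (hcard ℓ hℓ le_rfl)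
      have hex : ∃ i, i < ℓ ∧ R (i + 1) ≤ R i := by
        by_contra hno
        push_neg at hno
        have hgrow : ∀ i, i ≤ ℓ → i + 1 ≤ R i := by
          intro i
          induction i with
          | zero => intro _; omega
          | succ i ih =>
            intro hi
            have h1 := hno i (by omega)
            have h2 := ih (by omega)
            omega
        have := hgrow ℓ le_rfl
        omega
      obtain ⟨istar, histar, hieq'⟩ := hex
      have hieq : R (istar + 1) = R istar := le_antisymm hieq' (hRmono istar)
      have hsplit1 : ∀ a, fac ω a (istar + 1) = fac ω a 1 ++ fac ω (a + 1) istar := by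
        intro a
        rw [Nat.add_comm istar 1]
        exact fac_add ω a 1 istar
      have hinj : ∀ t₁ t₂, t₁ < L - ℓ → t₂ < L - ℓ →
          fac ω t₁ istar = fac ω t₂ istar →
          fac ω t₁ (istar + 1) = fac ω t₂ (istar + 1) := by
        intro t₁ t₂ h₁ h₂ heq
        have himg2 : ((Finset.range (L - ℓ)).image (fun t => fac ω t (istar + 1))).image
            (List.take istar) = (Finset.range (L - ℓ)).image (fun t => fac ω t istar) := by
          rw [Finset.image_image]
          apply Finset.image_congr
          intro t _
          exact fac_take ω t (istar + 1) istar (by omega)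
        have hAcard : (((Finset.range (L - ℓ)).image (fun t => fac ω t (istar + 1))).image
            (List.take istar)).card =
            ((Finset.range (L - ℓ)).image (fun t => fac ω t (istar + 1))).card := by
          rw [himg2]
          exact hieq.symm
        have hInj := Finset.injOn_of_card_image_eq hAcard
        have hm₁ : fac ω t₁ (istar + 1) ∈
            (Finset.range (L - ℓ)).image (fun t => fac ω t (istar + 1)) :=
          Finset.mem_image_of_mem _ (Finset.mem_range.mpr h₁)
        have hm₂ : fac ω t₂ (istar + 1) ∈
            (Finset.range (L - ℓ)).image (fun t => fac ω t (istar + 1)) :=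
          Finset.mem_image_of_mem _ (Finset.mem_range.mpr h₂)
        apply hInj hm₁ hm₂
        rw [fac_take ω t₁ (istar + 1) istar (by omega),
          fac_take ω t₂ (istar + 1) istar (by omega)]
        exact heq
      have hpig : ∃ t₁ t₂, t₁ < t₂ ∧ t₂ ≤ R istar ∧ fac ω t₁ istar = fac ω t₂ istar := by
        have hRi : R istar ≤ ℓ := le_trans (hRMono (le_of_lt histar)) hRℓ
        have hcard_lt : ((Finset.range (L - ℓ)).image (fun t => fac ω t istar)).card <
            (Finset.range (R istar + 1)).card := by
          rw [Finset.card_range]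
          have : ((Finset.range (L - ℓ)).image (fun t => fac ω t istar)).card = R istar := rfl
          omega
        have hmaps : ∀ t ∈ Finset.range (R istar + 1),
            fac ω t istar ∈ (Finset.range (L - ℓ)).image (fun t => fac ω t istar) := by
          intro t htmem
          apply Finset.mem_image_of_mem
          rw [Finset.mem_range] at htmem ⊢
          omega
        obtain ⟨x, hx, y, hy, hxy, hfxy⟩ :=
          Finset.exists_ne_map_eq_of_card_lt_of_maps_to hcard_lt hmaps
        rw [Finset.mem_range] at hx hy
        rcases lt_or_gt_of_ne hxy with h | h
        · exact ⟨x, y, h, by omega, hfxy⟩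
        · exact ⟨y, x, h, by omega, hfxy.symm⟩
      obtain ⟨t₁, t₂, ht12, ht₂R, hteq⟩ := hpig
      have hRi : R istar ≤ ℓ := le_trans (hRMono (le_of_lt histar)) hRℓ
      set p := t₂ - t₁ with hpdef
      have hp1 : 1 ≤ p := by omega
      have hpR : p ≤ R istar := by omega
      have hkey : t₁ + n * p ≤ L - ℓ := by
        have e0 : n * p = p + (n - 1) * p := by
          have h1 : n = (n - 1) + 1 := by omega
          calc n * p = ((n - 1) + 1) * p := by rw [← h1]
            _ = (n - 1) * p + p := by rw [Nat.succ_mul]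
            _ = p + (n - 1) * p := by ring
        have e3 : (n - 1) * p ≤ (n - 1) * ℓ := Nat.mul_le_mul_left _ (by omega)
        have e5 : ℓ + (n - 1) * ℓ = ℓ * n := by
          have h1 : n = (n - 1) + 1 := by omega
          calc ℓ + (n - 1) * ℓ = ((n - 1) + 1) * ℓ := by rw [Nat.succ_mul]; ring
            _ = n * ℓ := by rw [← h1]
            _ = ℓ * n := by ring
        omega
      have hprop : ∀ j, t₂ + j ≤ L - ℓ - 1 →
          fac ω (t₁ + j) (istar + 1) = fac ω (t₂ + j) (istar + 1) := by
        intro j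
        induction j with
        | zero =>
          intro hj
          have h1 := hinj t₁ t₂ (by omega) (by omega) hteq
          simpa using h1
        | succ j ihj =>
          intro hj
          have hprev := ihj (by omega)
          rw [hsplit1 (t₁ + j), hsplit1 (t₂ + j)] at hprev
          have hlen1 : (fac ω (t₁ + j) 1).length = 1 :=
            fac_length ω _ _ (by rw [hlen]; omega)
          have hlen2 : (fac ω (t₂ + j) 1).length = 1 :=
            fac_length ω _ _ (by rw [hlen]; omega)
          have htail := (List.append_inj hprev (hlen1.trans hlen2.symm)).2
          exact hinj (t₁ + (j + 1)) (t₂ + (j + 1)) (by omega) (by omega) htail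
      have hlett : ∀ a, t₁ ≤ a → a + p ≤ L - ℓ - 1 → fac ω a 1 = fac ω (a + p) 1 := by
        intro a ha hap
        have hj := hprop (a - t₁) (by omega)
        rw [show t₁ + (a - t₁) = a by omega, show t₂ + (a - t₁) = a + p by omega] at hj
        rw [hsplit1 a, hsplit1 (a + p)] at hj
        have hlen1 : (fac ω a 1).length = 1 := fac_length ω _ _ (by rw [hlen]; omega)
        have hlen2 : (fac ω (a + p) 1).length = 1 := fac_length ω _ _ (by rw [hlen]; omega)
        exact (List.append_inj hj (hlen1.trans hlen2.symm)).1
      have hblock : ∀ x a b, (∀ r, r < x → fac ω (a + r) 1 = fac ω (b + r) 1) →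
          fac ω a x = fac ω b x := by
        intro x
        induction x with
        | zero => intro a b _; rfl
        | succ x ihx =>
          intro a b h
          rw [fac_add ω a x 1, fac_add ω b x 1]
          rw [ihx a b (fun r hr => h r (by omega)), h x (by omega)]
      have hublock : ∀ j, j + 1 ≤ n → fac ω (t₁ + j * p) p = fac ω t₁ p := by
        intro j hj
        induction j with
        | zero => simp
        | succ j ihj =>
          have hprev := ihj (by omega)
          have hstep : fac ω (t₁ + j * p) p = fac ω (t₁ + (j + 1) * p) p := by
            apply hblock p (t₁ + j * p) (t₁ + (j + 1) * p)
            intro r hr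
            have h1 : t₁ + (j + 1) * p + r = (t₁ + j * p + r) + p := by ring
            rw [h1]
            apply hlett (t₁ + j * p + r) (by omega)
            have h2 : (j + 1 + 1) * p ≤ n * p := Nat.mul_le_mul_right p hj
            have h3 : t₁ + j * p + r + p + 1 ≤ t₁ + (j + 1 + 1) * p := by
              have h4 : j * p + p + p = (j + 1 + 1) * p := by ring
              omega
            omega
          rw [← hstep]
          exact hprev
      set u := fac ω t₁ p with hudef
      set U := ev e u with hUdef
      have hpow : ∀ j, j ≤ n → ev e (fac ω t₁ (j * p)) = U ^ j := by
        intro j hj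
        induction j with
        | zero =>
          show ev e (fac ω t₁ (0 * p)) = U ^ 0
          rw [Nat.zero_mul, pow_zero]
          rfl
        | succ j ihj =>
          have h1 : (j + 1) * p = j * p + p := by ring
          rw [h1, fac_add ω t₁ (j * p) p, ev_append, ihj (by omega),
            hublock j (by omega), pow_succ]
      have hUj_mem : ∀ j, j ≤ n - 1 → U ^ j ∈ wordSpan k S ((n - 1) * p) := by
        intro j hj
        rw [← hpow j (by omega)]
        apply hev_mem
        have h1 : t₁ + j * p ≤ ω.length := by
          rw [hlen]
          have : j * p ≤ n * p := Nat.mul_le_mul_right p (by omega)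
          omega
        rw [fac_length ω t₁ (j * p) h1]
        exact Nat.mul_le_mul_right p hj
      have hchar : U ^ n ∈ wordSpan k S ((n - 1) * p) := by
        have h0 := Matrix.aeval_self_charpoly U
        rw [Polynomial.aeval_eq_sum_range] at h0
        have hdeg : U.charpoly.natDegree = n := by
          rw [Matrix.charpoly_natDegree_eq_dim, Fintype.card_fin]
        rw [hdeg, Finset.sum_range_succ] at h0
        have hmonic : U.charpoly.coeff n = 1 := by
          have hm := (Matrix.charpoly_monic U).coeff_natDegree
          rw [hdeg] at hm
          exact hm
        rw [hmonic, one_smul] at h0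
        have hUn : U ^ n = ∑ j ∈ Finset.range n, (-(U.charpoly.coeff j)) • U ^ j := by
          have h1 : U ^ n = -∑ j ∈ Finset.range n, U.charpoly.coeff j • U ^ j :=
            eq_neg_of_add_eq_zero_right h0
          rw [h1, ← Finset.sum_neg_distrib]
          apply Finset.sum_congr rfl
          intro j _
          rw [neg_smul]
        rw [hUn]
        exact Submodule.sum_mem _ (fun j hj => Submodule.smul_mem _ _
          (hUj_mem j (by rw [Finset.mem_range] at hj; omega)))
      have hdec2 := fac_decomp ω t₁ (n * p)
      have hωev : ev e ω = ev e (ω.take t₁) * (U ^ n) * ev e (ω.drop (t₁ + n * p)) := by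
        conv_lhs => rw [hdec2]
        rw [ev_append, ev_append, hpow n le_rfl]
      rw [hωev]
      have hfin := hmul (ω.take t₁) (ω.drop (t₁ + n * p)) hchar
      have hlP : (ω.take t₁).length = t₁ := by rw [List.length_take]; omega
      have hlQ : (ω.drop (t₁ + n * p)).length = L - (t₁ + n * p) := by
        rw [List.length_drop, hlen]
      rw [hlP, hlQ] at hfin
      refine wordSpan_mono ?_ hfin
      have e0 : n * p = (n - 1) * p + p := by
        have h1 : n = (n - 1) + 1 := by omega
        calc n * p = ((n - 1) + 1) * p := by rw [← h1]
          _ = (n - 1) * p + p := by rw [Nat.succ_mul]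
      omega

end WordProof

theorem stmt_0 {k : Type*} [Field k] (n ℓ : ℕ) (hℓ : 1 ≤ ℓ)
    (S : Finset (Matrix (Fin n) (Fin n) k))
    (hgen : Algebra.adjoin k (S : Set (Matrix (Fin n) (Fin n) k)) = ⊤)
    (hgrowth : ∀ i : ℕ, Module.finrank k (wordSpan k (S : Set (Matrix (Fin n) (Fin n) k)) (i + 1)) ≤
      Module.finrank k (wordSpan k (S : Set (Matrix (Fin n) (Fin n) k)) i) + ℓ)
    (w : List (Matrix (Fin n) (Fin n) k)) (hw : ∀ a ∈ w, a ∈ S)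
    (hlen : w.length = ℓ * (n + 1)) :
    w.prod ∈ wordSpan k (S : Set (Matrix (Fin n) (Fin n) k)) (ℓ * (n + 1) - 1) := by
  rcases le_or_gt 2 n with hn | hn
  · -- main case via the key lemma
    set e : Fin w.length → Matrix (Fin n) (Fin n) k := w.get with hedef
    have he : ∀ d, e d ∈ (S : Set (Matrix (Fin n) (Fin n) k)) := by
      intro d
      exact hw _ (List.get_mem w d)
    have henc : WordProof.ev e (List.finRange w.length) = w.prod := by
      unfold WordProof.ev
      rw [hedef, List.map_get_finRange w]
    have hkey := WordProof.key hn hℓ hgrowth e he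
      (WordProof.msr (List.finRange w.length) + 1) (List.finRange w.length)
      (by rw [List.length_finRange]; exact hlen) (by omega)
    rw [henc] at hkey
    exact hkey
  · -- degenerate cases n = 0, 1
    have h1 : (1 : Matrix (Fin n) (Fin n) k) ∈
        wordSpan k (S : Set (Matrix (Fin n) (Fin n) k)) 0 :=
      WordProof.prod_mem_wordSpan (l := []) (by simp) (by simp)
    interval_cases n
    · -- n = 0
      have : w.prod = (0 : Matrix (Fin 0) (Fin 0) k) := Subsingleton.elim _ _
      rw [this]
      exact Submodule.zero_mem _
    · -- n = 1
      have hx : w.prod = (w.prod 0 0) • (1 : Matrix (Fin 1) (Fin 1) k) := by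
        ext i j
        fin_cases i; fin_cases j
        simp [Matrix.one_apply]
      rw [hx]
      exact WordProof.wordSpan_mono (Nat.zero_le _) (Submodule.smul_mem _ _ h1)
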